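/- Let p > 0 and let g : ℝ → ℂ be rapidly decreasing, i.e. for every N ≥ 1 there is C_N with |g(η)| ≤ C_N (1 + |η|)^{−N} for all η ∈ ℝ. Then ∑_{k∈ℤ∖{0}, |k−ξ| > √|ξ|} |k|^{−p} |g(ξ − k)| = o(|ξ|^{−p}) as |ξ| → ∞. -/

import Mathlib

open Filter Real Set
open scoped Topology

lemma aux_nat_summable : Summable (fun n : ℕ => ((1 + (n : ℝ)) ^ 2)⁻¹) := by
  have h : Summable (fun n : ℕ => 1 / ((n : ℝ)) ^ 2) :=
    Real.summable_one_div_nat_pow.mpr one_lt_two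
  have h2 := (summable_nat_add_iff 1).mpr h
  refine h2.congr fun n => ?_
  push_cast
  rw [one_div]
  ring_nf

lemma aux_int_summable : Summable (fun m : ℤ => ((1 + |(m : ℝ)|) ^ 2)⁻¹) := by
  apply Summable.of_nat_of_neg
  · refine aux_nat_summable.congr fun n => ?_
    simp
  · refine aux_nat_summable.congr fun n => ?_
    simp

lemma aux_shift_le (ξ : ℝ) (m : ℤ) :
    ((1 + |(m : ℝ) + (round ξ : ℝ) - ξ|) ^ 2)⁻¹ ≤ 4 * ((1 + |(m : ℝ)|) ^ 2)⁻¹ := by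
  have hround : |ξ - (round ξ : ℝ)| ≤ 1 / 2 := abs_sub_round ξ
  have hnn : (0 : ℝ) ≤ |(m : ℝ)| := abs_nonneg _
  have h1 : (1 + |(m : ℝ)|) / 2 ≤ 1 + |(m : ℝ) + (round ξ : ℝ) - ξ| := by
    have h := abs_add_le ((m : ℝ) + (round ξ : ℝ) - ξ) (ξ - (round ξ : ℝ))
    have h' : |(m : ℝ)| ≤ |(m : ℝ) + (round ξ : ℝ) - ξ| + |ξ - (round ξ : ℝ)| := by
      have : (m : ℝ) + (round ξ : ℝ) - ξ + (ξ - (round ξ : ℝ)) = (m : ℝ) := by ring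
      rwa [this] at h
    linarith
  have hpos : (0 : ℝ) < (1 + |(m : ℝ)|) / 2 := by positivity
  have hsq : ((1 + |(m : ℝ)|) / 2) ^ 2 ≤ (1 + |(m : ℝ) + (round ξ : ℝ) - ξ|) ^ 2 :=
    pow_le_pow_left₀ hpos.le h1 2
  calc ((1 + |(m : ℝ) + (round ξ : ℝ) - ξ|) ^ 2)⁻¹
      ≤ (((1 + |(m : ℝ)|) / 2) ^ 2)⁻¹ := inv_anti₀ (by positivity) hsq
    _ = 4 * ((1 + |(m : ℝ)|) ^ 2)⁻¹ := by
        field_simp; ring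

lemma aux_summable' (ξ : ℝ) :
    Summable (fun m : ℤ => ((1 + |(m : ℝ) + (round ξ : ℝ) - ξ|) ^ 2)⁻¹) :=
  Summable.of_nonneg_of_le (fun m => by positivity) (fun m => aux_shift_le ξ m)
    (aux_int_summable.mul_left 4)

lemma aux_tsum_eq (ξ : ℝ) :
    ∑' m : ℤ, ((1 + |(m : ℝ) + (round ξ : ℝ) - ξ|) ^ 2)⁻¹
      = ∑' k : ℤ, ((1 + |(k : ℝ) - ξ|) ^ 2)⁻¹ := by
  have h := (Equiv.addRight (round ξ)).tsum_eq
    (fun k : ℤ => ((1 + |(k : ℝ) - ξ|) ^ 2)⁻¹)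
  simpa [Equiv.coe_addRight] using h

lemma aux_summable (ξ : ℝ) : Summable (fun k : ℤ => ((1 + |(k : ℝ) - ξ|) ^ 2)⁻¹) := by
  rw [← (Equiv.addRight (round ξ)).summable_iff]
  refine (aux_summable' ξ).congr fun m => ?_
  simp [Equiv.coe_addRight]

lemma aux_tsum_le (ξ : ℝ) :
    ∑' k : ℤ, ((1 + |(k : ℝ) - ξ|) ^ 2)⁻¹ ≤ 4 * ∑' m : ℤ, ((1 + |(m : ℝ)|) ^ 2)⁻¹ := by
  have h := Summable.tsum_le_tsum (fun m => aux_shift_le ξ m) (aux_summable' ξ)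
    (aux_int_summable.mul_left 4)
  rw [tsum_mul_left] at h
  rw [← aux_tsum_eq ξ]
  exact h

/-- **The far-off-diagonal part of the sum is negligible** (Hong, Lifshits, Nazarov,
the estimate `Σ₂ = o(|ξ|^{-p})` in the proof of (2.10)).

If `g : ℝ → ℂ` is rapidly decreasing, then for `p > 0`,
`∑_{k ∈ ℤ∖{0}, |k - ξ| > √|ξ|} |k| ^ (-p) * ‖g (ξ - k)‖ = o(|ξ| ^ (-p))` as
`|ξ| → ∞` (i.e. along the cocompact filter on `ℝ`). -/
theorem tail_sum_rapidly_decreasing_negligible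
    (p : ℝ) (hp : 0 < p) (g : ℝ → ℂ)
    (hg : ∀ N : ℕ, 1 ≤ N → ∃ C : ℝ, ∀ η : ℝ, ‖g η‖ ≤ C * (1 + |η|) ^ (-(N : ℝ))) :
    Tendsto
      (fun ξ : ℝ => |ξ| ^ p *
        ∑' k : ℤ,
          if k ≠ 0 ∧ Real.sqrt |ξ| < |(k : ℝ) - ξ|
            then |(k : ℝ)| ^ (-p) * ‖g (ξ - k)‖ else 0)
      (Filter.cocompact ℝ) (𝓝 0) := by
  set M : ℕ := ⌈2 * p⌉₊ + 1 with hM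
  have hMp : 2 * p < (M : ℝ) := by
    have := Nat.le_ceil (2 * p)
    push_cast [hM]
    linarith
  set N : ℕ := M + 2 with hN
  obtain ⟨C, hC⟩ := hg N (by omega)
  set C' : ℝ := max C 0 with hC'
  have hC'0 : 0 ≤ C' := le_max_right _ _
  have hCb : ∀ η : ℝ, ‖g η‖ ≤ C' * (1 + |η|) ^ (-(N : ℝ)) := fun η =>
    (hC η).trans (mul_le_mul_of_nonneg_right (le_max_left _ _) (by positivity))
  set K : ℝ := 4 * ∑' m : ℤ, ((1 + |(m : ℝ)|) ^ 2)⁻¹ with hK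
  have hK0 : 0 ≤ K := by
    rw [hK]
    have : (0:ℝ) ≤ ∑' m : ℤ, ((1 + |(m : ℝ)|) ^ 2)⁻¹ := tsum_nonneg (fun m : ℤ => by positivity :
      ∀ m : ℤ, (0:ℝ) ≤ ((1 + |(m : ℝ)|) ^ 2)⁻¹)
    linarith
  -- pointwise bound on the summand
  have key : ∀ ξ : ℝ, ∀ k : ℤ,
      (if k ≠ 0 ∧ Real.sqrt |ξ| < |(k : ℝ) - ξ|
        then |(k : ℝ)| ^ (-p) * ‖g (ξ - k)‖ else 0)
      ≤ C' * (1 + Real.sqrt |ξ|) ^ (-(M : ℝ)) * ((1 + |(k : ℝ) - ξ|) ^ 2)⁻¹ := by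
    intro ξ k
    split_ifs with h
    · obtain ⟨hk0, hk⟩ := h
      have hk1 : (1 : ℝ) ≤ |(k : ℝ)| := by
        have := Int.one_le_abs hk0
        exact_mod_cast this
      have hkp : |(k : ℝ)| ^ (-p) ≤ 1 :=
        Real.rpow_le_one_of_one_le_of_nonpos hk1 (by linarith)
      have hx : (0 : ℝ) < 1 + |(k : ℝ) - ξ| := by positivity
      have hgb : ‖g (ξ - k)‖ ≤ C' * (1 + |(k : ℝ) - ξ|) ^ (-(N : ℝ)) := by
        have := hCb (ξ - k)
        rwa [abs_sub_comm ξ (k : ℝ)] at this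
      have hsplit : (1 + |(k : ℝ) - ξ|) ^ (-(N : ℝ))
          = (1 + |(k : ℝ) - ξ|) ^ (-(M : ℝ)) * ((1 + |(k : ℝ) - ξ|) ^ 2)⁻¹ := by
        rw [← Real.rpow_natCast (1 + |(k : ℝ) - ξ|) 2, ← Real.rpow_neg hx.le,
          ← Real.rpow_add hx]
        norm_num [hN]
        ring_nf
      have hmono : (1 + |(k : ℝ) - ξ|) ^ (-(M : ℝ))
          ≤ (1 + Real.sqrt |ξ|) ^ (-(M : ℝ)) := by
        apply Real.rpow_le_rpow_of_nonpos (by positivity) (by linarith)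
        simp
      calc |(k : ℝ)| ^ (-p) * ‖g (ξ - k)‖
          ≤ 1 * (C' * (1 + |(k : ℝ) - ξ|) ^ (-(N : ℝ))) := by
            apply mul_le_mul hkp hgb (norm_nonneg _) zero_le_one
        _ = C' * ((1 + |(k : ℝ) - ξ|) ^ (-(M : ℝ)) * ((1 + |(k : ℝ) - ξ|) ^ 2)⁻¹) := by
            rw [one_mul, hsplit]
        _ ≤ C' * ((1 + Real.sqrt |ξ|) ^ (-(M : ℝ)) * ((1 + |(k : ℝ) - ξ|) ^ 2)⁻¹) := by
            apply mul_le_mul_of_nonneg_left (mul_le_mul_of_nonneg_right hmono (by positivity)) hC'0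
        _ = C' * (1 + Real.sqrt |ξ|) ^ (-(M : ℝ)) * ((1 + |(k : ℝ) - ξ|) ^ 2)⁻¹ := by ring
    · positivity
  -- the tsum bound
  have tsum_bound : ∀ ξ : ℝ,
      (∑' k : ℤ, if k ≠ 0 ∧ Real.sqrt |ξ| < |(k : ℝ) - ξ|
        then |(k : ℝ)| ^ (-p) * ‖g (ξ - k)‖ else 0)
      ≤ C' * K * (1 + Real.sqrt |ξ|) ^ (-(M : ℝ)) := by
    intro ξ
    have hsum : Summable (fun k : ℤ =>
        if k ≠ 0 ∧ Real.sqrt |ξ| < |(k : ℝ) - ξ|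
          then |(k : ℝ)| ^ (-p) * ‖g (ξ - k)‖ else 0) := by
      apply Summable.of_nonneg_of_le (fun k => ?_) (key ξ) ((aux_summable ξ).mul_left _)
      split_ifs <;> positivity
    calc (∑' k : ℤ, if k ≠ 0 ∧ Real.sqrt |ξ| < |(k : ℝ) - ξ|
          then |(k : ℝ)| ^ (-p) * ‖g (ξ - k)‖ else 0)
        ≤ ∑' k : ℤ, C' * (1 + Real.sqrt |ξ|) ^ (-(M : ℝ)) * ((1 + |(k : ℝ) - ξ|) ^ 2)⁻¹ :=
          Summable.tsum_le_tsum (key ξ) hsum ((aux_summable ξ).mul_left _)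
      _ = C' * (1 + Real.sqrt |ξ|) ^ (-(M : ℝ)) * ∑' k : ℤ, ((1 + |(k : ℝ) - ξ|) ^ 2)⁻¹ :=
          tsum_mul_left
      _ ≤ C' * (1 + Real.sqrt |ξ|) ^ (-(M : ℝ)) * K := by
          apply mul_le_mul_of_nonneg_left (aux_tsum_le ξ) (by positivity)
      _ = C' * K * (1 + Real.sqrt |ξ|) ^ (-(M : ℝ)) := by ring
  -- the majorant tends to zero
  have hmaj : Tendsto (fun ξ : ℝ => C' * K * (|ξ| ^ p * (1 + Real.sqrt |ξ|) ^ (-(M : ℝ))))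
      (Filter.cocompact ℝ) (𝓝 0) := by
    have habs : Tendsto (fun ξ : ℝ => |ξ|) (Filter.cocompact ℝ) atTop := by
      exact Tendsto.congr (fun x => Real.norm_eq_abs x)
        (tendsto_norm_cocompact_atTop (E := ℝ))
    have hh : Tendsto (fun t : ℝ => t ^ p * (1 + Real.sqrt t) ^ (-(M : ℝ))) atTop (𝓝 0) := by
      have hexp : (0 : ℝ) < (M : ℝ) / 2 - p := by linarith
      have hlim : Tendsto (fun t : ℝ => t ^ (-((M : ℝ) / 2 - p))) atTop (𝓝 0) :=
        tendsto_rpow_neg_atTop hexp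
      apply squeeze_zero' ?_ ?_ hlim
      · filter_upwards [eventually_ge_atTop (1 : ℝ)] with t ht
        positivity
      · filter_upwards [eventually_ge_atTop (1 : ℝ)] with t ht
        have ht0 : (0 : ℝ) < t := by linarith
        have hs : (0 : ℝ) < Real.sqrt t := Real.sqrt_pos.mpr ht0
        have h1 : (1 + Real.sqrt t) ^ (-(M : ℝ)) ≤ (Real.sqrt t) ^ (-(M : ℝ)) :=
          Real.rpow_le_rpow_of_nonpos hs (by linarith) (by simp)
        have h2 : (Real.sqrt t) ^ (-(M : ℝ)) = t ^ (-((M : ℝ) / 2)) := by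
          rw [Real.sqrt_eq_rpow, ← Real.rpow_mul ht0.le]
          congr 1
          ring
        calc t ^ p * (1 + Real.sqrt t) ^ (-(M : ℝ))
            ≤ t ^ p * t ^ (-((M : ℝ) / 2)) := by
              rw [← h2]
              exact mul_le_mul_of_nonneg_left h1 (by positivity)
          _ = t ^ (-((M : ℝ) / 2 - p)) := by
              rw [← Real.rpow_add ht0]; ring_nf
    have := (hh.comp habs).const_mul (C' * K)
    simpa [mul_comm, mul_assoc, Function.comp] using this
  -- squeeze
  apply squeeze_zero' ?_ ?_ hmaj
  · filter_upwards with ξ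
    apply mul_nonneg (by positivity)
    apply tsum_nonneg
    intro k
    split_ifs <;> positivity
  · filter_upwards with ξ
    calc |ξ| ^ p * ∑' k : ℤ, (if k ≠ 0 ∧ Real.sqrt |ξ| < |(k : ℝ) - ξ|
          then |(k : ℝ)| ^ (-p) * ‖g (ξ - k)‖ else 0)
        ≤ |ξ| ^ p * (C' * K * (1 + Real.sqrt |ξ|) ^ (-(M : ℝ))) :=
          mul_le_mul_of_nonneg_left (tsum_bound ξ) (by positivity)
      _ = C' * K * (|ξ| ^ p * (1 + Real.sqrt |ξ|) ^ (-(M : ℝ))) := by ring
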